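/- Let 0 < ε < 1, T > 1, M ≥ 1, and let g : ℝ^n → ℝ be monotone, i.e., g(x) ≤ g(y) whenever x_i ≤ y_i for every coordinate i. Assume g(0) ≥ 0, that g(x) ≥ 1/T for every nonzero vector x with 0 ≤ x_i ≤ M for all i, and that g(M·𝟙) ≤ T, where 𝟙 is the all-ones vector. Let f^{(0)} = 0 and let f^{(0)}, f^{(1)}, …, f^{(m)} ∈ ℝ^n satisfy 0 ≤ f^{(t)}_i ≤ M for all t, i, with f^{(t)}_i nondecreasing in t for every fixed i (an insertion-only stream). Then every ε-flip chain in the sequence (g(f^{(0)}), g(f^{(1)}), …, g(f^{(m)})) has length at most 2 + 2·ln(T)/ε. -/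

import Mathlib

/-- Proposition 3.4: a monotone function `g` whose value is at least `1/T` on nonzero vectors
(with coordinates in `[0, M]`) and at most `T` on the all-`M` vector has `ε`-flip number at most
`2 + 2·ln T / ε` on insertion-only streams: every `ε`-flip chain (a strictly increasing list of
time steps `≤ m` along which consecutive values of `g` leave the `(1 ± ε)`-window) has length at
most `2 + 2·ln T / ε`. -/
theorem stmt_2 (n m : ℕ) (ε T M : ℝ) (g : (Fin n → ℝ) → ℝ) (f : ℕ → Fin n → ℝ)
    (hε0 : 0 < ε) (hε1 : ε < 1) (hT : 1 < T) (hM : 1 ≤ M)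
    (hmono : ∀ x y : Fin n → ℝ, (∀ i, x i ≤ y i) → g x ≤ g y)
    (hg0 : 0 ≤ g 0)
    (hglb : ∀ x : Fin n → ℝ, x ≠ 0 → (∀ i, 0 ≤ x i ∧ x i ≤ M) → 1 / T ≤ g x)
    (hgub : g (fun _ => M) ≤ T)
    (hf0 : f 0 = 0)
    (hfbd : ∀ t ≤ m, ∀ i, 0 ≤ f t i ∧ f t i ≤ M)
    (hfmono : ∀ s t, s ≤ t → t ≤ m → ∀ i, f s i ≤ f t i) :
    ∀ l : List ℕ, l.Chain' (· < ·) → (∀ x ∈ l, x ≤ m) →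
      l.Chain' (fun a b =>
        ¬((1 - ε) * g (f b) ≤ g (f a) ∧ g (f a) ≤ (1 + ε) * g (f b))) →
      (l.length : ℝ) ≤ 2 + 2 * Real.log T / ε := by
  intro l hlt hle hflip
  have hT0 : (0:ℝ) < T := by linarith
  have hlogT : 0 ≤ Real.log T := Real.log_nonneg hT.le
  have hε' : (0:ℝ) < 1 - ε := by linarith
  have hvnn : ∀ t ≤ m, 0 ≤ g (f t) := by
    intro t ht
    refine le_trans hg0 (hmono 0 (f t) ?_)
    intro i; exact (hfbd t ht i).1
  have hvub : ∀ t ≤ m, g (f t) ≤ T := by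
    intro t ht
    refine le_trans (hmono (f t) (fun _ => M) ?_) hgub
    intro i; exact (hfbd t ht i).2
  by_cases hk : l.length ≤ 2
  · have : (l.length : ℝ) ≤ 2 := by exact_mod_cast hk
    have : 0 ≤ 2 * Real.log T / ε := by positivity
    linarith
  push_neg at hk
  -- consecutive elements satisfy a strict geometric growth
  have hmem : ∀ (i : ℕ) (h : i < l.length), l.get ⟨i, h⟩ ≤ m := by
    intro i h; exact hle _ (l.get_mem ⟨i, h⟩)
  have hR : ∀ (i : ℕ) (h : i + 1 < l.length),
      g (f (l.get ⟨i, by omega⟩)) < (1 - ε) * g (f (l.get ⟨i+1, h⟩)) := by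
    intro i h
    set a := l.get ⟨i, by omega⟩ with ha
    set b := l.get ⟨i+1, h⟩ with hb
    have hab : a < b := List.isChain_iff_getElem.mp hlt i (by omega)
    have hbm : b ≤ m := hmem _ h
    have hvab : g (f a) ≤ g (f b) := hmono _ _ (hfmono a b hab.le hbm)
    have hvb : 0 ≤ g (f b) := hvnn b hbm
    have hfl : ¬((1 - ε) * g (f b) ≤ g (f a) ∧ g (f a) ≤ (1 + ε) * g (f b)) :=
      List.isChain_iff_getElem.mp hflip i (by omega)
    by_contra hcon
    push_neg at hcon
    exact hfl ⟨hcon, by nlinarith⟩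
  -- lower bound along the chain starting at index 1
  have key : ∀ (j : ℕ), 1 ≤ j → ∀ (h : j < l.length),
      1 / T ≤ (1 - ε) ^ (j - 1) * g (f (l.get ⟨j, h⟩)) := by
    intro j
    induction j with
    | zero => omega
    | succ j ih =>
      intro _ h
      by_cases hj : j = 0
      · subst hj
        -- base case: index 1
        have h0 : (0:ℕ) < l.length := by omega
        have hr := hR 0 h
        set a := l.get ⟨0, by omega⟩ with ha
        set b := l.get ⟨1, h⟩ with hb
        have ham : a ≤ m := hmem _ (by omega)
        have hbm : b ≤ m := hmem _ h
        have hva : 0 ≤ g (f a) := hvnn a ham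
        have hvbpos : 0 < g (f b) := by nlinarith
        have hfbne : f b ≠ 0 := by
          intro hz
          have hab : a < b := List.isChain_iff_getElem.mp hlt 0 (by omega)
          have hfa : f a = 0 := by
            funext i
            have h1 := (hfbd a ham i).1
            have h2 := hfmono a b hab.le hbm i
            rw [hz] at h2
            simp only [Pi.zero_apply] at h2 ⊢
            linarith
          rw [hfa, hz] at hr
          nlinarith
        have := hglb (f b) hfbne (hfbd b hbm)
        simpa using this
      · have hj1 : 1 ≤ j := by omega
        have hjl : j < l.length := by omega
        have hih := ih hj1 hjl
        have hr := hR j h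
        have hpow : (0:ℝ) < (1 - ε) ^ (j - 1) := by positivity
        have hstep : (1 - ε) ^ (j - 1) * g (f (l.get ⟨j, hjl⟩)) <
            (1 - ε) ^ (j - 1) * ((1 - ε) * g (f (l.get ⟨j+1, h⟩))) :=
          mul_lt_mul_of_pos_left hr hpow
        have hexp : (1 - ε) ^ (j - 1) * (1 - ε) = (1 - ε) ^ (j + 1 - 1) := by
          rw [← pow_succ]
          congr 1
          omega
        calc 1 / T ≤ (1 - ε) ^ (j - 1) * g (f (l.get ⟨j, hjl⟩)) := hih
          _ ≤ (1 - ε) ^ (j + 1 - 1) * g (f (l.get ⟨j+1, h⟩)) := by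
              rw [← hexp]; nlinarith
  -- apply at the last index
  set k := l.length with hkdef
  have hk3 : 3 ≤ k := by omega
  have hlast : k - 1 < k := by omega
  have hkey := key (k - 1) (by omega) hlast
  have hvlast : g (f (l.get ⟨k - 1, hlast⟩)) ≤ T := hvub _ (hmem _ hlast)
  have hvlastnn : 0 ≤ g (f (l.get ⟨k - 1, hlast⟩)) := hvnn _ (hmem _ hlast)
  have hpow : (0:ℝ) < (1 - ε) ^ (k - 1 - 1) := by positivity
  have h1 : 1 / T ≤ (1 - ε) ^ (k - 1 - 1) * T := by nlinarith
  -- take logs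
  have hlog1 : Real.log (1 / T) ≤ Real.log ((1 - ε) ^ (k - 1 - 1) * T) :=
    Real.log_le_log (by positivity) h1
  rw [Real.log_mul (by positivity) (by positivity), Real.log_pow,
    Real.log_div one_ne_zero (by positivity), Real.log_one] at hlog1
  have hlogeps : Real.log (1 - ε) ≤ -ε := by
    have := Real.log_le_sub_one_of_pos hε'
    linarith
  have hknn : (0:ℝ) ≤ ((k - 1 - 1 : ℕ) : ℝ) := Nat.cast_nonneg _
  have h2 : ((k - 1 - 1 : ℕ) : ℝ) * Real.log (1 - ε) ≤ ((k - 1 - 1 : ℕ) : ℝ) * (-ε) :=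
    mul_le_mul_of_nonneg_left hlogeps hknn
  have h3 : ((k - 1 - 1 : ℕ) : ℝ) * ε ≤ 2 * Real.log T := by linarith
  have hcast : ((k - 1 - 1 : ℕ) : ℝ) = (k : ℝ) - 2 := by
    have : k - 1 - 1 = k - 2 := by omega
    rw [this]
    push_cast [Nat.cast_sub (by omega : 2 ≤ k)]
    ring
  rw [hcast] at h3
  have : ((k:ℝ) - 2) ≤ 2 * Real.log T / ε := by
    rw [le_div_iff₀ hε0]; linarith
  linarith
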